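/- Let n ≡ 1 (mod 6). If there exist (2^n - 2)/42 pairwise disjoint complete 3-dimensional F_2-subspaces of F_{2^n} (i.e., subspaces X_1, ..., X_m with |Δ(X_i)| = 42 and Δ(X_i) ∩ Δ(X_j) = ∅ for i ≠ j, m = (2^n-2)/42), then the set of all cyclic shifts { α^j·X_i : 0 ≤ j ≤ 2^n - 2, 1 ≤ i ≤ m } is a Steiner structure S_2[2,3,n]. -/

import Mathlib

/-- If `n ≡ 1 (mod 6)` and there exist `(2^n - 2)/42` pairwise disjoint complete
3-dimensional `F_2`-subspaces of `F_{2^n}` (each difference set, equivalently ratio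
set, has size 42, and the difference sets are pairwise disjoint), then the set of
all their cyclic shifts `α^j·X_i` is a Steiner structure `S_2[2,3,n]`: every
2-dimensional subspace is contained in exactly one member. -/
theorem disjoint_complete_subspaces_give_steiner
    (n : ℕ) (hn : n % 6 = 1)
    (F : Type*) [Field F] [Fintype F] (hcard : Fintype.card F = 2 ^ n)
    [Algebra (ZMod 2) F]
    (α : Fˣ) (hα : orderOf α = 2 ^ n - 1)
    (m : ℕ) (hm : m = (2 ^ n - 2) / 42)
    (X : Fin m → Submodule (ZMod 2) F)
    (hdim : ∀ i, Module.finrank (ZMod 2) (X i) = 3)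
    (hcomplete : ∀ i,
      { z : F | ∃ x ∈ X i, ∃ y ∈ X i, x ≠ 0 ∧ y ≠ 0 ∧ x ≠ y ∧ z = x / y }.ncard = 42)
    (hdisj : ∀ i j, i ≠ j →
      Disjoint { z : F | ∃ x ∈ X i, ∃ y ∈ X i, x ≠ 0 ∧ y ≠ 0 ∧ x ≠ y ∧ z = x / y }
        { z : F | ∃ x ∈ X j, ∃ y ∈ X j, x ≠ 0 ∧ y ≠ 0 ∧ x ≠ y ∧ z = x / y }) :
    ∀ T : Submodule (ZMod 2) F, Module.finrank (ZMod 2) T = 2 →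
      ∃! W : Submodule (ZMod 2) F,
        (∃ i : Fin m, ∃ j ≤ 2 ^ n - 2,
          (W : Set F) = (fun x : F => (α : F) ^ j * x) '' (X i : Set F)) ∧
        T ≤ W := by
  classical
  intro T hT
  haveI : Module.Finite (ZMod 2) F :=
    ⟨⟨Finset.univ, by rw [Finset.coe_univ, Submodule.span_univ]⟩⟩
  set R : Fin m → Set F := fun i =>
    { z : F | ∃ x ∈ X i, ∃ y ∈ X i, x ≠ 0 ∧ y ≠ 0 ∧ x ≠ y ∧ z = x / y } with hR
  -- numerology
  have hn1 : 1 ≤ n := by omega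
  have h2n : (2:ℕ) ≤ 2 ^ n := by
    calc (2:ℕ) = 2 ^ 1 := rfl
    _ ≤ 2 ^ n := Nat.pow_le_pow_right (by norm_num) hn1
  have hdvd : 42 ∣ 2 ^ n - 2 := by
    obtain ⟨k, hk⟩ : ∃ k, n = 6 * k + 1 := ⟨n / 6, by omega⟩
    have h64 : (2:ℕ) ^ (6 * k) = 64 ^ k := by rw [pow_mul]; norm_num
    have h21 : 21 ∣ 2 ^ (6 * k) - 1 := by
      rw [h64]
      have : (64:ℕ) - 1 ∣ 64 ^ k - 1 ^ k := Nat.sub_dvd_pow_sub_pow 64 1 k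
      simp only [one_pow] at this
      exact dvd_trans (by norm_num) this
    obtain ⟨t, ht⟩ := h21
    refine ⟨t, ?_⟩
    have h1 : (1:ℕ) ≤ 2 ^ (6 * k) := Nat.one_le_two_pow
    have e : (2:ℕ) ^ (6 * k + 1) = 2 ^ (6 * k) * 2 := pow_succ 2 (6 * k)
    subst hk
    omega
  have hm42 : 42 * m = 2 ^ n - 2 := by rw [hm]; exact Nat.mul_div_cancel' hdvd
  -- the union of the ratio sets is everything except 0 and 1
  set S : Set F := { z : F | z ≠ 0 ∧ z ≠ 1 } with hSdef
  have hRS : ∀ i, R i ⊆ S := by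
    rintro i z ⟨x, hx, y, hy, hx0, hy0, hxy, rfl⟩
    exact ⟨div_ne_zero hx0 hy0, fun h => hxy ((div_eq_one_iff_eq hy0).1 h)⟩
  have hScard : S.ncard = 2 ^ n - 2 := by
    have hSeq : S = Set.univ \ {0, 1} := by
      ext z; simp [hSdef, and_comm]
    rw [hSeq, Set.ncard_diff (Set.subset_univ _), Set.ncard_univ,
      Set.ncard_pair (zero_ne_one (α := F)), Nat.card_eq_fintype_card, hcard]
  have hRfin : ∀ i, (R i).Finite := fun i => Set.toFinite _
  have hUS : (⋃ i, R i) = S := by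
    refine Set.eq_of_subset_of_ncard_le (Set.iUnion_subset hRS) ?_ (Set.toFinite _)
    set B : Finset F := Finset.univ.biUnion (fun i : Fin m => (hRfin i).toFinset) with hB
    have hUB : (⋃ i, R i) = ↑B := by
      ext z
      simp only [Set.mem_iUnion, hB, Finset.coe_biUnion, Finset.mem_coe,
        Finset.mem_univ, Set.iUnion_true, Set.mem_iUnion, Set.Finite.mem_toFinset]
    have hcardB : B.card = 42 * m := by
      rw [hB, Finset.card_biUnion]
      · have : ∀ i ∈ Finset.univ, ((hRfin i).toFinset).card = 42 := by
          intro i _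
          rw [← Set.ncard_eq_toFinset_card (R i) (hRfin i)]
          exact hcomplete i
        rw [Finset.sum_congr rfl this, Finset.sum_const, Finset.card_univ,
          Fintype.card_fin, smul_eq_mul, mul_comm]
      · intro i _ j _ hij
        simp only [Function.onFun]; rw [Set.Finite.disjoint_toFinset]
        exact hdisj i j hij
    rw [hScard, hUB, Set.ncard_coe_finset, hcardB, hm42]
  -- each X i has exactly 7 nonzero elements
  have hX7 : ∀ i, ((X i : Set F) \ {0}).ncard = 7 := by
    intro i
    haveI : Fintype (X i) := Fintype.ofFinite _
    have h8 : Nat.card (X i) = 8 := by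
      rw [Nat.card_eq_fintype_card, Module.card_eq_pow_finrank (K := ZMod 2), hdim i, ZMod.card]
      norm_num
    have hc : (X i : Set F).ncard = 8 := by
      rw [← Nat.card_coe_set_eq]
      exact h8
    rw [Set.ncard_diff (by simpa using (X i).zero_mem) (Set.toFinite _),
      hc, Set.ncard_singleton]
  -- the ratio map is injective on ordered pairs of distinct nonzero elements of X i
  have key : ∀ i, Set.InjOn (fun p : F × F => p.1 / p.2)
      (((X i : Set F) \ {0}).offDiag) := by
    intro i
    set s : Set F := (X i : Set F) \ {0} with hs
    have hsfin : s.Finite := Set.toFinite _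
    set t : Finset F := hsfin.toFinset with htdef
    have hts : (t : Set F) = s := hsfin.coe_toFinset
    have htcard : t.card = 7 := by
      rw [htdef, ← Set.ncard_eq_toFinset_card s hsfin]; exact hX7 i
    have hoffcoe : (t.offDiag : Set (F × F)) = s.offDiag := by
      rw [Finset.coe_offDiag, hts]
    have hoffcard : t.offDiag.card = 42 := by
      rw [Finset.offDiag_card, htcard]
    have himg : (fun p : F × F => p.1 / p.2) '' s.offDiag = R i := by
      ext z
      constructor
      · rintro ⟨⟨x, y⟩, hp, rfl⟩
        rw [Set.mem_offDiag] at hp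
        obtain ⟨⟨hxX, hx0⟩, ⟨hyX, hy0⟩, hxy⟩ := hp
        exact ⟨x, hxX, y, hyX, by simpa using hx0, by simpa using hy0, hxy, rfl⟩
      · rintro ⟨x, hxX, y, hyX, hx0, hy0, hxy, rfl⟩
        exact ⟨(x, y), Set.mem_offDiag.2 ⟨⟨hxX, by simpa using hx0⟩,
          ⟨hyX, by simpa using hy0⟩, hxy⟩, rfl⟩
    have H : (t.offDiag.image (fun p : F × F => p.1 / p.2)).card = t.offDiag.card := by
      have : ((t.offDiag.image (fun p : F × F => p.1 / p.2)) : Set F) = R i := by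
        rw [Finset.coe_image, hoffcoe, himg]
      have hic : (t.offDiag.image (fun p : F × F => p.1 / p.2)).card = 42 := by
        rw [← Set.ncard_coe_finset, this]; exact hcomplete i
      rw [hic, hoffcard]
    have := Finset.injOn_of_card_image_eq H
    rwa [hoffcoe] at this
  -- extract two generators of T
  haveI : FiniteDimensional (ZMod 2) T := inferInstance
  let bb : Module.Basis (Fin 2) (ZMod 2) T := Module.finBasisOfFinrankEq (ZMod 2) T hT
  set a : F := (bb 0 : F) with ha
  set b : F := (bb 1 : F) with hb
  have haT : a ∈ T := (bb 0).2
  have hbT : b ∈ T := (bb 1).2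
  have ha0 : a ≠ 0 := by
    simpa [ha, Submodule.coe_eq_zero] using bb.ne_zero 0
  have hb0 : b ≠ 0 := by
    simpa [hb, Submodule.coe_eq_zero] using bb.ne_zero 1
  have hab : a ≠ b := by
    intro h
    have : bb 0 = bb 1 := Subtype.ext h
    exact (by norm_num : (0 : Fin 2) ≠ 1) (bb.injective this)
  have hind : LinearIndependent (ZMod 2) (fun i : Fin 2 => ((bb i : T) : F)) := by
    have := bb.linearIndependent.map' T.subtype (Submodule.ker_subtype T)
    exact this
  have hrange : Set.range (fun i : Fin 2 => ((bb i : T) : F)) = {a, b} := by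
    ext u
    constructor
    · rintro ⟨i, rfl⟩
      fin_cases i
      · exact Or.inl rfl
      · exact Or.inr rfl
    · rintro (rfl | rfl)
      · exact ⟨0, rfl⟩
      · exact ⟨1, rfl⟩
  have hspan : Submodule.span (ZMod 2) {a, b} = T := by
    have hle : Submodule.span (ZMod 2) {a, b} ≤ T := by
      rw [Submodule.span_le]
      rintro u (rfl | rfl)
      · exact haT
      · exact hbT
    have hfr : Module.finrank (ZMod 2) (Submodule.span (ZMod 2) {a, b}) = 2 := by
      rw [← hrange]
      have := finrank_span_eq_card hind
      simpa using this
    exact Submodule.eq_of_le_of_finrank_le hle (by rw [hT, hfr])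
  -- locate the ratio a / b
  have hz0 : a / b ≠ 0 := div_ne_zero ha0 hb0
  have hz1 : a / b ≠ 1 := fun h => hab ((div_eq_one_iff_eq hb0).1 h)
  have hzS : a / b ∈ S := ⟨hz0, hz1⟩
  rw [← hUS] at hzS
  obtain ⟨_, ⟨i, rfl⟩, hzi⟩ := hzS
  obtain ⟨x, hxX, y, hyX, hx0, hy0, hxy, hzxy⟩ := hzi
  -- the multiplier
  set c : F := a / x with hc
  have hc0 : c ≠ 0 := div_ne_zero ha0 hx0
  have hca : c * x = a := div_mul_cancel₀ a hx0
  have h1 : a * y = x * b := (div_eq_div_iff hb0 hy0).1 hzxy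
  have hcb : c * y = b := by
    rw [hc, div_mul_eq_mul_div, h1, mul_comm, mul_div_assoc, div_self hx0, mul_one]
  -- write c as a power of α
  have hpow : ∃ j ≤ 2 ^ n - 2, (α : F) ^ j = c := by
    have htop : Subgroup.zpowers α = ⊤ := by
      apply Subgroup.eq_top_of_card_eq
      rw [Nat.card_zpowers, hα, Nat.card_units, Nat.card_eq_fintype_card, hcard]
    have hmem : Units.mk0 c hc0 ∈ Subgroup.zpowers α := htop ▸ Subgroup.mem_top _
    rw [← mem_powers_iff_mem_zpowers] at hmem
    obtain ⟨k, hk⟩ := hmem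
    refine ⟨k % orderOf α, ?_, ?_⟩
    · have hlt : k % orderOf α < orderOf α :=
        Nat.mod_lt _ (by rw [hα]; omega)
      rw [hα] at hlt ⊢
      omega
    · replace hk : α ^ k = Units.mk0 c hc0 := hk
      have : α ^ (k % orderOf α) = Units.mk0 c hc0 := by
        rw [pow_mod_orderOf, hk]
      calc (α : F) ^ (k % orderOf α) = ((α ^ (k % orderOf α) : Fˣ) : F) := by
            rw [Units.val_pow_eq_pow_val]
      _ = c := by rw [this]; rfl
  obtain ⟨j, hj, hαj⟩ := hpow
  -- the covering subspace
  set W : Submodule (ZMod 2) F := (X i).map (LinearMap.mulLeft (ZMod 2) c) with hW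
  have hWset : (W : Set F) = (fun x : F => c * x) '' (X i : Set F) := by
    rw [hW, Submodule.map_coe]
    rfl
  have hWset' : (W : Set F) = (fun x : F => (α : F) ^ j * x) '' (X i : Set F) := by
    rw [hWset, hαj]
  have hTW : T ≤ W := by
    rw [← hspan, Submodule.span_le]
    rintro u (rfl | rfl)
    · exact Submodule.mem_map.2 ⟨x, hxX, hca⟩
    · exact Submodule.mem_map.2 ⟨y, hyX, hcb⟩
  refine ⟨W, ⟨⟨i, j, hj, hWset'⟩, hTW⟩, ?_⟩
  -- uniqueness
  rintro W' ⟨⟨i', j', hj', hW'set⟩, hTW'⟩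
  set c' : F := (α : F) ^ j' with hc'
  have hc'0 : c' ≠ 0 := pow_ne_zero _ (Units.ne_zero α)
  have haW' : a ∈ (W' : Set F) := hTW' haT
  have hbW' : b ∈ (W' : Set F) := hTW' hbT
  rw [hW'set] at haW' hbW'
  obtain ⟨x', hx'X, hax'⟩ := haW'
  obtain ⟨y', hy'X, hby'⟩ := hbW'
  replace hax' : c' * x' = a := hax'
  replace hby' : c' * y' = b := hby'
  have hx'0 : x' ≠ 0 := by
    rintro rfl; rw [mul_zero] at hax'; exact ha0 hax'.symm
  have hy'0 : y' ≠ 0 := by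
    rintro rfl; rw [mul_zero] at hby'; exact hb0 hby'.symm
  have hx'y' : x' ≠ y' := by
    rintro rfl; rw [hax'] at hby'; exact hab hby'
  have hz' : a / b = x' / y' := by
    rw [← hax', ← hby', mul_div_mul_left _ _ hc'0]
  have hii : i' = i := by
    by_contra hne
    have h1 : a / b ∈ R i' := ⟨x', hx'X, y', hy'X, hx'0, hy'0, hx'y', hz'⟩
    have h2 : a / b ∈ R i := ⟨x, hxX, y, hyX, hx0, hy0, hxy, hzxy⟩
    exact (hdisj i' i hne).ne_of_mem h1 h2 rfl
  subst hii
  -- injectivity forces the same pair, hence the same multiplier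
  have hmem1 : (x', y') ∈ ((X i' : Set F) \ {0}).offDiag :=
    Set.mem_offDiag.2 ⟨⟨hx'X, by simpa using hx'0⟩, ⟨hy'X, by simpa using hy'0⟩, hx'y'⟩
  have hmem2 : (x, y) ∈ ((X i' : Set F) \ {0}).offDiag :=
    Set.mem_offDiag.2 ⟨⟨hxX, by simpa using hx0⟩, ⟨hyX, by simpa using hy0⟩, hxy⟩
  have heqp : ((x', y') : F × F) = (x, y) := by
    apply key i' hmem1 hmem2
    show x' / y' = x / y
    rw [← hz', ← hzxy]
  have hx'x : x' = x := congrArg Prod.fst heqp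
  have hcc : c' = c := by
    rw [hc]
    rw [← hax', hx'x, mul_div_assoc, div_self hx0, mul_one]
  apply SetLike.coe_injective
  rw [hW'set, hWset', hcc, hαj]
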